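/- For any g : Z_+ → [0, ∞), conditional on S_0 = r ≥ 1, E[Σ_{n=1}^{T-1} g(n) X_n | S_0 = r] = r·E[f(T) | S_0 = r - 1], where f(k) = Σ_{n=1}^k g(n) π_n = E[g(U_1) 1{U_1 ≤ k}]. -/

import Mathlib

open MeasureTheory ProbabilityTheory
open scoped ENNReal NNReal

set_option linter.unusedSectionVars false

namespace ModelReduction

variable {Ω : Type*} [MeasurableSpace Ω]

/-- The event that every value in `[1,n)` is hit by some client in `A`. -/
def Ecov (U : ℕ → Ω → ℕ) (A : Finset ℕ) (n : ℕ) : Set Ω :=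
  {ω | ∀ m ∈ Finset.Ico 1 n, ∃ t ∈ A, U t ω = m}

/-- First value `≥ 1` missed by all clients in `A`. -/
noncomputable def TT (U : ℕ → Ω → ℕ) (A : Finset ℕ) (ω : Ω) : ℕ :=
  sInf {n | 1 ≤ n ∧ (A.filter fun s => U s ω = n).card = 0}

lemma mNat (s : Set ℕ) : MeasurableSet s := (Set.to_countable s).measurableSet

lemma measurableSet_Ecov {U : ℕ → Ω → ℕ} (hUm : ∀ s, Measurable (U s))
    (A : Finset ℕ) (n : ℕ) : MeasurableSet (Ecov U A n) := by
  have h : Ecov U A n = ⋂ m ∈ Finset.Ico 1 n, ⋃ t ∈ A, {ω | U t ω = m} := by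
    ext ω; simp [Ecov]
  rw [h]
  exact MeasurableSet.biInter (Finset.Ico 1 n).countable_toSet fun m _ =>
    MeasurableSet.biUnion A.countable_toSet fun t _ => hUm t (mNat {m})

lemma TT_set_nonempty (U : ℕ → Ω → ℕ) (A : Finset ℕ) (ω : Ω) :
    {n | 1 ≤ n ∧ (A.filter fun s => U s ω = n).card = 0}.Nonempty := by
  refine ⟨(A.sup fun s => U s ω) + 1, Nat.succ_le_succ (Nat.zero_le _), ?_⟩
  rw [Finset.card_eq_zero, Finset.filter_eq_empty_iff]
  intro s hs h
  have h2 : U s ω ≤ A.sup fun s => U s ω := by simpa using Finset.le_sup (f := fun s => U s ω) hs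
  omega

lemma le_TT_iff {U : ℕ → Ω → ℕ} {A : Finset ℕ} {ω : Ω} {n : ℕ} :
    n ≤ TT U A ω ↔ ω ∈ Ecov U A n := by
  constructor
  · intro h m hm
    rw [Finset.mem_Ico] at hm
    have hnot := Nat.notMem_of_lt_sInf (s := {n | 1 ≤ n ∧ (A.filter fun s => U s ω = n).card = 0})
      (lt_of_lt_of_le hm.2 h)
    simp only [Set.mem_setOf_eq, not_and] at hnot
    have := hnot hm.1
    rw [Finset.card_eq_zero, ← ne_eq, ← Finset.nonempty_iff_ne_empty] at this
    obtain ⟨t, ht⟩ := this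
    rw [Finset.mem_filter] at ht
    exact ⟨t, ht.1, ht.2⟩
  · intro h
    by_contra h'
    push_neg at h'
    have hmem := Nat.sInf_mem (TT_set_nonempty U A ω)
    obtain ⟨h1, h2⟩ := hmem
    obtain ⟨t, ht, htm⟩ := h _ (Finset.mem_Ico.2 ⟨h1, h'⟩)
    rw [Finset.card_eq_zero, Finset.filter_eq_empty_iff] at h2
    exact h2 ht htm

lemma lt_TT_iff {U : ℕ → Ω → ℕ} {A : Finset ℕ} {s : ℕ} (hs : s ∈ A) {ω : Ω}
    (h1 : 1 ≤ U s ω) : U s ω < TT U A ω ↔ U s ω ≤ TT U (A.erase s) ω := by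
  rw [Nat.lt_iff_add_one_le, le_TT_iff, le_TT_iff]
  constructor
  · intro h m hm
    rw [Finset.mem_Ico] at hm
    obtain ⟨t, ht, hts⟩ := h m (Finset.mem_Ico.2 ⟨hm.1, by omega⟩)
    refine ⟨t, Finset.mem_erase.2 ⟨?_, ht⟩, hts⟩
    rintro rfl
    omega
  · intro h m hm
    rw [Finset.mem_Ico] at hm
    rcases eq_or_lt_of_le (Nat.lt_succ_iff.mp hm.2) with heq | hlt
    · exact ⟨s, hs, heq.symm⟩
    · obtain ⟨t, ht, hts⟩ := h m (Finset.mem_Ico.2 ⟨hm.1, hlt⟩)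
      exact ⟨t, Finset.mem_of_mem_erase ht, hts⟩


/-- truncation of values to `{0} ∪ [1,n)`. -/
def theta (n u : ℕ) : ℕ := if 1 ≤ u ∧ u < n then u else 0

lemma theta_eq_zero_iff (n u : ℕ) : theta n u = 0 ↔ ¬(1 ≤ u ∧ u < n) := by
  unfold theta; split <;> omega

lemma theta_eq_iff {n c : ℕ} (hc : 1 ≤ c) (hcn : c < n) (u : ℕ) :
    theta n u = c ↔ u = c := by
  unfold theta; split <;> omega

lemma theta_lt {n : ℕ} (hn : 1 ≤ n) (u : ℕ) : theta n u < n := by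
  unfold theta; split <;> omega

lemma theta_measure_eq {μ : Measure Ω} [IsProbabilityMeasure μ] {π : ℕ → ℝ}
    {U : ℕ → Ω → ℕ} (hUm : ∀ s, Measurable (U s))
    (hU : ∀ s, ∀ n, 1 ≤ n → μ {ω | U s ω = n} = ENNReal.ofReal (π n))
    (n : ℕ) (s t c : ℕ) :
    μ {ω | theta n (U s ω) = c} = μ {ω | theta n (U t ω) = c} := by
  rcases Nat.eq_zero_or_pos c with rfl | hc
  · have key : ∀ s : ℕ, μ {ω | theta n (U s ω) = 0}
        = 1 - ∑ m ∈ Finset.Ico 1 n, ENNReal.ofReal (π m) := by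
      intro s
      have hU1 : (⋃ m ∈ Finset.Ico 1 n, {ω | U s ω = m}) = {ω | 1 ≤ U s ω ∧ U s ω < n} := by
        ext ω
        simp only [Set.mem_iUnion, Finset.mem_Ico, Set.mem_setOf_eq, exists_prop]
        constructor
        · rintro ⟨m, hm, rfl⟩; exact hm
        · intro hm; exact ⟨_, hm, rfl⟩
      have hset : {ω | theta n (U s ω) = 0} = (⋃ m ∈ Finset.Ico 1 n, {ω | U s ω = m})ᶜ := by
        rw [hU1]
        ext ω
        simp only [Set.mem_setOf_eq, theta_eq_zero_iff, Set.mem_compl_iff]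
      have hmeas : MeasurableSet (⋃ m ∈ Finset.Ico 1 n, {ω | U s ω = m}) :=
        MeasurableSet.biUnion (Finset.Ico 1 n).countable_toSet fun m _ => hUm s (mNat {m})
      have hun : μ (⋃ m ∈ Finset.Ico 1 n, {ω | U s ω = m})
          = ∑ m ∈ Finset.Ico 1 n, ENNReal.ofReal (π m) := by
        rw [measure_biUnion_finset (f := fun m => {ω | U s ω = m}) ?hd
          (fun m _ => hUm s (mNat {m}))]
        · exact Finset.sum_congr rfl fun m hm => hU s m (Finset.mem_Ico.1 hm).1
        · intro a _ b _ hab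
          simp only [Function.onFun, Set.disjoint_left, Set.mem_setOf_eq]
          rintro ω rfl; exact fun h => hab h
      rw [hset, prob_compl_eq_one_sub hmeas, hun]
    rw [key s, key t]
  · by_cases hcn : c < n
    · have hs : ∀ s : ℕ, {ω | theta n (U s ω) = c} = {ω | U s ω = c} := fun s => by
        ext ω; exact theta_eq_iff hc hcn _
      rw [hs s, hs t, hU s c hc, hU t c hc]
    · have he : ∀ s : ℕ, {ω | theta n (U s ω) = c} = (∅ : Set Ω) := fun s => by
        ext ω
        simp only [Set.mem_setOf_eq, Set.mem_empty_iff_false, iff_false]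
        have := theta_eq_zero_iff n (U s ω)
        unfold theta
        split <;> omega
      rw [he s, he t]


open scoped Classical in
noncomputable def patGood (A : Finset ℕ) (n : ℕ) : Finset ((a : ℕ) → a ∈ A → ℕ) :=
  (A.pi fun _ => Finset.range n).filter fun t =>
    ∀ m ∈ Finset.Ico 1 n, ∃ s, ∃ h : s ∈ A, t s h = m

lemma prod_dite_attach {M : Type*} [CommMonoid M] (A : Finset ℕ)
    (t : (a : ℕ) → a ∈ A → ℕ) (pM : ℕ → M) :
    ∏ s ∈ A, pM (if h : s ∈ A then t s h else 0) = ∏ x ∈ A.attach, pM (t x.1 x.2) := by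
  rw [← Finset.prod_attach A fun s => pM (if h : s ∈ A then t s h else 0)]
  exact Finset.prod_congr rfl fun x _ => by rw [dif_pos x.2]

lemma measure_Ecov_formula {μ : Measure Ω}
    {U : ℕ → Ω → ℕ} (hUm : ∀ s, Measurable (U s))
    (hindep : iIndepFun U μ)
    {n : ℕ} (hn : 1 ≤ n) (A : Finset ℕ) (pM : ℕ → ℝ≥0∞)
    (hpM : ∀ s c, μ {ω | theta n (U s ω) = c} = pM c) :
    μ (Ecov U A n)
      = ∑ t ∈ patGood A n, ∏ s ∈ A, pM (if h : s ∈ A then t s h else 0) := by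
  have hdecomp : Ecov U A n = ⋃ t ∈ patGood A n,
      ⋂ s ∈ A, U s ⁻¹' {u | theta n u = if h : s ∈ A then t s h else 0} := by
    ext ω
    simp only [Ecov, Set.mem_setOf_eq, Set.mem_iUnion, Set.mem_iInter, patGood,
      Finset.mem_filter, Finset.mem_pi, Finset.mem_range, exists_prop, Set.mem_preimage]
    constructor
    · intro hω
      refine ⟨fun a _ => theta n (U a ω), ⟨fun a ha => theta_lt hn _, fun m hm => ?_⟩,
        fun s hs => by rw [dif_pos hs]⟩
      obtain ⟨t, ht, htm⟩ := hω m hm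
      refine ⟨t, ht, ?_⟩
      show theta n (U t ω) = m
      rw [htm]
      have hm' := Finset.mem_Ico.1 hm
      unfold theta; split <;> omega
    · rintro ⟨t, ⟨hmem, hgood⟩, hC⟩ m hm
      obtain ⟨s, hs, hts⟩ := hgood m hm
      refine ⟨s, hs, ?_⟩
      have h2 := hC s hs
      rw [dif_pos hs, hts] at h2
      have hm' := Finset.mem_Ico.1 hm
      revert h2; unfold theta; split <;> omega
  rw [hdecomp, measure_biUnion_finset ?hd ?hm]
  · refine Finset.sum_congr rfl fun t ht => ?_
    rw [hindep.meas_biInter (fun s _ =>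
      ⟨{u | theta n u = if h : s ∈ A then t s h else 0}, MeasurableSpace.measurableSet_top, rfl⟩)]
    exact Finset.prod_congr rfl fun s _ => hpM s _
  case hd =>
    intro t ht t' ht' hne
    rw [Function.onFun, Set.disjoint_left]
    intro ω hω hω'
    apply hne
    simp only [Set.mem_iInter, Set.mem_preimage, Set.mem_setOf_eq] at hω hω'
    funext a ha
    have h1 := hω a ha; have h2 := hω' a ha
    rw [dif_pos ha] at h1 h2
    rw [← h1, ← h2]
  case hm =>
    exact fun t _ => MeasurableSet.biInter A.countable_toSet fun s _ => (hUm s) (mNat _)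

lemma sum_patGood_eq {A B : Finset ℕ} (hcard : A.card = B.card) (n : ℕ) (pM : ℕ → ℝ≥0∞) :
    ∑ t ∈ patGood A n, ∏ s ∈ A, pM (if h : s ∈ A then t s h else 0)
      = ∑ t ∈ patGood B n, ∏ s ∈ B, pM (if h : s ∈ B then t s h else 0) := by
  have e : {x // x ∈ A} ≃ {x // x ∈ B} :=
    Fintype.equivOfCardEq (by simpa [Fintype.card_coe] using hcard)
  refine Finset.sum_bij'
    (i := fun t _ => fun b hb => t (e.symm ⟨b, hb⟩).1 (e.symm ⟨b, hb⟩).2)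
    (j := fun u _ => fun a ha => u (e ⟨a, ha⟩).1 (e ⟨a, ha⟩).2)
    ?_ ?_ ?_ ?_ ?_
  · -- hi : maps into patGood B n
    intro t ht
    simp only [patGood, Finset.mem_filter, Finset.mem_pi, Finset.mem_range] at ht ⊢
    refine ⟨fun b hb => ht.1 _ _, fun m hm => ?_⟩
    obtain ⟨s, hs, hts⟩ := ht.2 m hm
    refine ⟨(e ⟨s, hs⟩).1, (e ⟨s, hs⟩).2, ?_⟩
    show t (e.symm ⟨(e ⟨s, hs⟩).1, (e ⟨s, hs⟩).2⟩).1 (e.symm ⟨(e ⟨s, hs⟩).1, (e ⟨s, hs⟩).2⟩).2 = m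
    rw [show e.symm ⟨(e ⟨s, hs⟩).1, (e ⟨s, hs⟩).2⟩ = ⟨s, hs⟩ from by simp]
    exact hts
  · -- hj
    intro u hu
    simp only [patGood, Finset.mem_filter, Finset.mem_pi, Finset.mem_range] at hu ⊢
    refine ⟨fun a ha => hu.1 _ _, fun m hm => ?_⟩
    obtain ⟨b, hb, hub⟩ := hu.2 m hm
    refine ⟨(e.symm ⟨b, hb⟩).1, (e.symm ⟨b, hb⟩).2, ?_⟩
    show u (e ⟨(e.symm ⟨b, hb⟩).1, (e.symm ⟨b, hb⟩).2⟩).1 (e ⟨(e.symm ⟨b, hb⟩).1, (e.symm ⟨b, hb⟩).2⟩).2 = m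
    rw [show e ⟨(e.symm ⟨b, hb⟩).1, (e.symm ⟨b, hb⟩).2⟩ = ⟨b, hb⟩ from by simp]
    exact hub
  · -- left_inv
    intro t ht
    funext a ha
    show t (e.symm ⟨(e ⟨a, ha⟩).1, (e ⟨a, ha⟩).2⟩).1 (e.symm ⟨(e ⟨a, ha⟩).1, (e ⟨a, ha⟩).2⟩).2 = t a ha
    rw [show e.symm ⟨(e ⟨a, ha⟩).1, (e ⟨a, ha⟩).2⟩ = ⟨a, ha⟩ from by simp]
  · -- right_inv
    intro u hu
    funext b hb
    show u (e ⟨(e.symm ⟨b, hb⟩).1, (e.symm ⟨b, hb⟩).2⟩).1 (e ⟨(e.symm ⟨b, hb⟩).1, (e.symm ⟨b, hb⟩).2⟩).2 = u b hb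
    rw [show e ⟨(e.symm ⟨b, hb⟩).1, (e.symm ⟨b, hb⟩).2⟩ = ⟨b, hb⟩ from by simp]
  · -- values
    intro t ht
    rw [prod_dite_attach A t pM, prod_dite_attach B _ pM]
    refine Finset.prod_bij' (fun x _ => e x) (fun y _ => e.symm y)
      (fun x _ => Finset.mem_attach _ _) (fun y _ => Finset.mem_attach _ _)
      (fun x _ => by simp) (fun y _ => by simp) ?_
    intro x _
    show pM (t x.1 x.2) = pM (t (e.symm ⟨(e x).1, (e x).2⟩).1 (e.symm ⟨(e x).1, (e x).2⟩).2)
    congr 1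
    rw [show e.symm ⟨(e x).1, (e x).2⟩ = x from by simp]

lemma measure_Ecov_eq_of_card_eq {μ : Measure Ω} [IsProbabilityMeasure μ] {π : ℕ → ℝ}
    {U : ℕ → Ω → ℕ} (hUm : ∀ s, Measurable (U s))
    (hindep : iIndepFun U μ)
    (hU : ∀ s, ∀ n, 1 ≤ n → μ {ω | U s ω = n} = ENNReal.ofReal (π n))
    {A B : Finset ℕ} (hcard : A.card = B.card) (n : ℕ) :
    μ (Ecov U A n) = μ (Ecov U B n) := by
  rcases Nat.eq_zero_or_pos n with rfl | hn
  · have h0 : ∀ C : Finset ℕ, Ecov U C 0 = Set.univ := fun C => by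
      ext ω; simp [Ecov]
    rw [h0 A, h0 B]
  · rw [measure_Ecov_formula hUm hindep hn A (fun c => μ {ω | theta n (U 0 ω) = c})
        (fun s c => theta_measure_eq hUm hU n s 0 c),
      measure_Ecov_formula hUm hindep hn B (fun c => μ {ω | theta n (U 0 ω) = c})
        (fun s c => theta_measure_eq hUm hU n s 0 c)]
    exact sum_patGood_eq hcard n (fun c => μ {ω | theta n (U 0 ω) = c})


lemma measure_inter_Ecov {μ : Measure Ω} [IsProbabilityMeasure μ] {U : ℕ → Ω → ℕ}
    (hUm : ∀ s, Measurable (U s))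
    (hindep : iIndepFun U μ)
    {s : ℕ} {B : Finset ℕ} (hs : s ∉ B) (n k : ℕ) :
    μ ({ω | U s ω = k} ∩ Ecov U B n) = μ {ω | U s ω = k} * μ (Ecov U B n) := by
  have hdisj : Disjoint ({s} : Finset ℕ) B := by simpa [Finset.disjoint_left] using hs
  have h := hindep.indepFun_finset {s} B hdisj hUm
  have hms : s ∈ ({s} : Finset ℕ) := Finset.mem_singleton_self s
  set S1 : Set ((i : ({s} : Finset ℕ)) → ℕ) := {v | v ⟨s, hms⟩ = k} with hS1
  set S2 : Set ((i : (B : Finset ℕ)) → ℕ) := {v | ∀ m ∈ Finset.Ico 1 n, ∃ t : (B : Finset ℕ), v t = m} with hS2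
  have h1 : MeasurableSet S1 := by
    have hme : Measurable (fun v : (i : ({s} : Finset ℕ)) → ℕ => v ⟨s, hms⟩) :=
      measurable_pi_apply _
    exact hme (mNat {u : ℕ | u = k})
  have h2 : MeasurableSet S2 := by
    have hh : S2 = ⋂ m ∈ Finset.Ico 1 n, ⋃ t : (B : Finset ℕ), {v | v t = m} := by
      ext v; simp [hS2]
    rw [hh]
    exact MeasurableSet.biInter (Finset.Ico 1 n).countable_toSet fun m _ =>
      MeasurableSet.iUnion fun t => by
        have hme : Measurable (fun v : (i : (B : Finset ℕ)) → ℕ => v t) :=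
          measurable_pi_apply _
        exact hme (mNat {u : ℕ | u = m})
  have key := h.measure_inter_preimage_eq_mul S1 S2 h1 h2
  have hp1 : (fun ω (i : ({s} : Finset ℕ)) => U i ω) ⁻¹' S1 = {ω | U s ω = k} := rfl
  have hp2 : (fun ω (i : (B : Finset ℕ)) => U i ω) ⁻¹' S2 = Ecov U B n := by
    ext ω
    simp only [Set.mem_preimage, hS2, Set.mem_setOf_eq, Ecov, Subtype.exists, exists_prop]
  rw [hp1, hp2] at key
  exact key

end ModelReduction

open ModelReduction in
/-- **Model-reduction lemma.** Clients' response times `U 0, U 1, …` (value `0` encoding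
"never responds") are i.i.d. with `P(U s = n) = π n` for `n ≥ 1`.  For `m` clients put
`X m n = #{s < m : U s = n}` and `T m = min {n ≥ 1 : X m n = 0}`.  For any
`g : ℤ₊ → [0,∞)` and `r ≥ 1`,
`E[∑_{n=1}^{T-1} g(n) X n | S₀ = r] = r · E[f(T) | S₀ = r - 1]`,
where `f k = ∑_{n=1}^k g(n) π n` (both sides may be infinite). -/
theorem model_reduction_lemma
    {Ω : Type*} [MeasurableSpace Ω] (μ : Measure Ω) [IsProbabilityMeasure μ]
    (π : ℕ → ℝ) (hπ : ∀ n, 1 ≤ n → 0 ≤ π n)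
    (U : ℕ → Ω → ℕ) (hUm : ∀ s, Measurable (U s))
    (hindep : iIndepFun U μ)
    (hU : ∀ s, ∀ n, 1 ≤ n → μ {ω | U s ω = n} = ENNReal.ofReal (π n))
    (X : ℕ → ℕ → Ω → ℕ)
    (hX : ∀ m n ω, X m n ω = ((Finset.range m).filter (fun s => U s ω = n)).card)
    (T : ℕ → Ω → ℕ) (hT : ∀ m ω, T m ω = sInf {n | 1 ≤ n ∧ X m n ω = 0})
    (g : ℕ → ℝ) (hg : ∀ n, 0 ≤ g n)
    (f : ℕ → ℝ) (hf : ∀ k, f k = ∑ n ∈ Finset.Icc 1 k, g n * π n)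
    (r : ℕ) (hr : 1 ≤ r) :
    ∫⁻ ω, ∑ n ∈ Finset.Ico 1 (T r ω), ENNReal.ofReal (g n) * (X r n ω : ℝ≥0∞) ∂μ
      = r * ∫⁻ ω, ENNReal.ofReal (f (T (r - 1) ω)) ∂μ := by
  classical
  have hTeq : ∀ m ω, T m ω = TT U (Finset.range m) ω := by
    intro m ω
    rw [hT]
    unfold TT
    congr 1
    ext n
    simp [hX]
  set Ev : ℕ → ℕ → Set Ω := fun s n =>
    if 1 ≤ n then {ω | U s ω = n} ∩ Ecov U ((Finset.range r).erase s) n else ∅ with hEv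
  set EvR : ℕ → Set Ω := fun n =>
    if 1 ≤ n then Ecov U (Finset.range (r - 1)) n else ∅ with hEvR
  have hUset : ∀ s n, MeasurableSet {ω | U s ω = n} := by
    intro s n
    exact (hUm s) (mNat {u : ℕ | u = n})
  have hEvMeas : ∀ s n, MeasurableSet (Ev s n) := by
    intro s n
    rw [hEv]
    dsimp only
    split
    · exact (hUset s n).inter (measurableSet_Ecov hUm _ _)
    · exact MeasurableSet.empty
  have hEvRMeas : ∀ n, MeasurableSet (EvR n) := by
    intro n
    rw [hEvR]
    dsimp only
    split
    · exact measurableSet_Ecov hUm _ _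
    · exact MeasurableSet.empty
  -- pointwise rewriting of the left-hand integrand
  have step1 : ∀ ω, (∑ n ∈ Finset.Ico 1 (T r ω), ENNReal.ofReal (g n) * (X r n ω : ℝ≥0∞))
      = ∑ s ∈ Finset.range r, ∑' n, (Ev s n).indicator (fun _ => ENNReal.ofReal (g n)) ω := by
    intro ω
    rw [hTeq r ω]
    have hX' : ∀ n, ((X r n ω : ℝ≥0∞))
        = ∑ s ∈ Finset.range r, if U s ω = n then 1 else 0 := by
      intro n
      rw [hX, Finset.card_filter]
      push_cast
      refine Finset.sum_congr rfl fun s _ => ?_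
      split <;> simp
    calc ∑ n ∈ Finset.Ico 1 (TT U (Finset.range r) ω), ENNReal.ofReal (g n) * (X r n ω : ℝ≥0∞)
        = ∑ n ∈ Finset.Ico 1 (TT U (Finset.range r) ω), ∑ s ∈ Finset.range r,
            (if U s ω = n then ENNReal.ofReal (g n) else 0) := by
          refine Finset.sum_congr rfl fun n _ => ?_
          rw [hX' n, Finset.mul_sum]
          refine Finset.sum_congr rfl fun s _ => ?_
          split <;> simp
      _ = ∑ s ∈ Finset.range r, ∑ n ∈ Finset.Ico 1 (TT U (Finset.range r) ω),
            (if U s ω = n then ENNReal.ofReal (g n) else 0) := Finset.sum_comm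
      _ = ∑ s ∈ Finset.range r, ∑' n, (Ev s n).indicator (fun _ => ENNReal.ofReal (g n)) ω := by
          refine Finset.sum_congr rfl fun s hs => ?_
          rw [Finset.sum_ite_eq (Finset.Ico 1 (TT U (Finset.range r) ω)) (U s ω)
            (fun n => ENNReal.ofReal (g n))]
          rw [tsum_eq_single (U s ω) ?side]
          case side =>
            intro n hn
            apply Set.indicator_of_notMem
            rw [hEv]
            dsimp only
            split
            · rintro ⟨hmem, -⟩
              exact hn hmem.symm
            · exact Set.notMem_empty ω
          by_cases h1 : 1 ≤ U s ω
          · have hiff : (U s ω ∈ Finset.Ico 1 (TT U (Finset.range r) ω))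
                ↔ ω ∈ Ecov U ((Finset.range r).erase s) (U s ω) := by
              rw [Finset.mem_Ico, ← le_TT_iff, ← lt_TT_iff hs h1]
              exact ⟨fun h => h.2, fun h => ⟨h1, h⟩⟩
            by_cases h2 : ω ∈ Ecov U ((Finset.range r).erase s) (U s ω)
            · rw [if_pos (hiff.2 h2), Set.indicator_of_mem]
              rw [hEv]
              dsimp only
              rw [if_pos h1]
              exact ⟨rfl, h2⟩
            · rw [if_neg (fun h => h2 (hiff.1 h)), Set.indicator_of_notMem]
              rw [hEv]
              dsimp only
              rw [if_pos h1]
              rintro ⟨-, hc⟩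
              exact h2 hc
          · rw [if_neg (fun h => h1 (Finset.mem_Ico.1 h).1), Set.indicator_of_notMem]
            rw [hEv]
            dsimp only
            rw [if_neg h1]
            exact Set.notMem_empty ω
  have hMeasH : ∀ s n, Measurable ((Ev s n).indicator (fun _ => ENNReal.ofReal (g n))) :=
    fun s n => measurable_const.indicator (hEvMeas s n)
  have hL1 : ∫⁻ ω, ∑ n ∈ Finset.Ico 1 (T r ω), ENNReal.ofReal (g n) * (X r n ω : ℝ≥0∞) ∂μ
      = ∑ s ∈ Finset.range r, ∑' n, ENNReal.ofReal (g n) * μ (Ev s n) := by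
    rw [lintegral_congr step1,
      lintegral_finset_sum _ (fun s _ => Measurable.ennreal_tsum fun n => hMeasH s n)]
    refine Finset.sum_congr rfl fun s _ => ?_
    rw [lintegral_tsum (fun n => (hMeasH s n).aemeasurable)]
    exact tsum_congr fun n => lintegral_indicator_const (hEvMeas s n) _
  set I : ℝ≥0∞ := ∑' n, ENNReal.ofReal (g n * π n) * μ (EvR n) with hI
  have hcard : ∀ s ∈ Finset.range r, ((Finset.range r).erase s).card
      = (Finset.range (r - 1)).card := by
    intro s hs
    rw [Finset.card_erase_of_mem hs, Finset.card_range, Finset.card_range]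
  have hper : ∀ s ∈ Finset.range r, (∑' n, ENNReal.ofReal (g n) * μ (Ev s n)) = I := by
    intro s hs
    refine tsum_congr fun n => ?_
    rcases Nat.eq_zero_or_pos n with rfl | hn
    · rw [hEv, hEvR]
      simp
    · have hn' : 1 ≤ n := hn
      have hEvn : Ev s n = {ω | U s ω = n} ∩ Ecov U ((Finset.range r).erase s) n := by
        rw [hEv]; dsimp only; rw [if_pos hn']
      have hEvRn : EvR n = Ecov U (Finset.range (r - 1)) n := by
        rw [hEvR]; dsimp only; rw [if_pos hn']
      rw [hEvn, hEvRn,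
        measure_inter_Ecov hUm hindep (Finset.notMem_erase s _) n n,
        measure_Ecov_eq_of_card_eq hUm hindep hU (hcard s hs) n,
        hU s n hn, ENNReal.ofReal_mul (hg n), mul_assoc]
  have hR1 : ∫⁻ ω, ENNReal.ofReal (f (T (r - 1) ω)) ∂μ = I := by
    have hpt : ∀ ω, ENNReal.ofReal (f (T (r - 1) ω))
        = ∑' n, (EvR n).indicator (fun _ => ENNReal.ofReal (g n * π n)) ω := by
      intro ω
      rw [hTeq, hf]
      rw [ENNReal.ofReal_sum_of_nonneg
        (fun n hn => mul_nonneg (hg n) (hπ n (Finset.mem_Icc.1 hn).1))]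
      refine Eq.symm ?_
      rw [tsum_eq_sum (s := Finset.Icc 1 (TT U (Finset.range (r - 1)) ω)) ?h0]
      case h0 =>
        intro n hn
        apply Set.indicator_of_notMem
        rw [Finset.mem_Icc] at hn
        push_neg at hn
        rw [hEvR]
        dsimp only
        by_cases h1 : 1 ≤ n
        · rw [if_pos h1]
          intro hc
          have := le_TT_iff.2 hc
          exact absurd (hn h1) (by omega)
        · rw [if_neg h1]
          exact Set.notMem_empty ω
      refine Finset.sum_congr rfl fun n hn => ?_
      rw [Finset.mem_Icc] at hn
      apply Set.indicator_of_mem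
      rw [hEvR]
      dsimp only
      rw [if_pos hn.1]
      exact le_TT_iff.1 hn.2
    rw [lintegral_congr hpt,
      lintegral_tsum (fun n => (measurable_const.indicator (hEvRMeas n)).aemeasurable)]
    exact tsum_congr fun n => lintegral_indicator_const (hEvRMeas n) _
  rw [hL1, Finset.sum_congr rfl hper, Finset.sum_const, Finset.card_range, nsmul_eq_mul, hR1]
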